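/- Let w ∈ A₂^d and let {λ_I}_{I∈D} be a sequence of nonnegative numbers that is Carleson with constant Q, i.e. (1/|J|) Σ_{I∈D(J)} λ_I ≤ Q for every J ∈ D. Then for every J ∈ D, (1/|J|) Σ_{I∈D(J)} λ_I / (m_I w⁻¹) ≤ 4 Q · m_J w. -/

import Mathlib

open MeasureTheory Set

noncomputable section

/-- The dyadic interval `[k 2^{-j}, (k+1) 2^{-j})`, indexed by `I = (j, k)`. -/
def dyadicI (I : ℤ × ℤ) : Set ℝ :=
  Set.Ico ((I.2 : ℝ) * 2 ^ (-I.1)) (((I.2 : ℝ) + 1) * 2 ^ (-I.1))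

/-- The length `|I| = 2^{-j}` of the dyadic interval indexed by `I = (j, k)`. -/
def len (I : ℤ × ℤ) : ℝ := 2 ^ (-I.1)

/-- The left half `I⁺` of the dyadic interval `I`. -/
def leftHalf (I : ℤ × ℤ) : ℤ × ℤ := (I.1 + 1, 2 * I.2)

/-- The right half `I⁻` of the dyadic interval `I`. -/
def rightHalf (I : ℤ × ℤ) : ℤ × ℤ := (I.1 + 1, 2 * I.2 + 1)

/-- The average `m_I f = (1/|I|) ∫_I f`. -/
def avg (f : ℝ → ℝ) (I : ℤ × ℤ) : ℝ := (len I)⁻¹ * ∫ x in dyadicI I, f x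

/-- The Haar function `h_I = |I|^{-1/2} (χ_{I⁺} - χ_{I⁻})`. -/
def haar (I : ℤ × ℤ) (x : ℝ) : ℝ :=
  (Real.sqrt (len I))⁻¹ *
    ((dyadicI (leftHalf I)).indicator (fun _ => (1 : ℝ)) x -
      (dyadicI (rightHalf I)).indicator (fun _ => (1 : ℝ)) x)

/-- The Haar coefficient `b_I = ⟨b, h_I⟩`. -/
def haarCoef (b : ℝ → ℝ) (I : ℤ × ℤ) : ℝ := ∫ x, b x * haar I x

/-- The dyadic BMO norm of `b`. -/
def bmoNorm (b : ℝ → ℝ) : ℝ :=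
  Real.sqrt (⨆ I : ℤ × ℤ, (len I)⁻¹ * ∫ x in dyadicI I, (b x - avg b I) ^ 2)

/-- The `A₂^d` characteristic `‖w‖_{A₂^d} = sup_I (m_I w)(m_I w⁻¹)`. -/
def A2const (w : ℝ → ℝ) : ℝ :=
  ⨆ I : ℤ × ℤ, avg w I * avg (fun x => (w x)⁻¹) I

/-- Proposition 1, inequality (3): if `w ∈ A₂^d` and `{λ_I}` is a nonnegative Carleson
sequence with constant `Q`, then `(1/|J|) Σ_{I ∈ D(J)} λ_I / (m_I w⁻¹) ≤ 4 Q m_J w`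
for every dyadic interval `J`.  (Sums over the infinite family `D(J)` are expressed as
uniform bounds over all finite subfamilies.) -/
lemma len_pos (I : ℤ × ℤ) : 0 < len I := zpow_pos two_pos _

lemma half_pow (j : ℤ) : (2:ℝ) ^ (-(j+1)) = 2 ^ (-j) / 2 := by
  rw [neg_add, zpow_add₀ (two_ne_zero), zpow_neg_one]; ring

lemma dyadic_split (I : ℤ × ℤ) :
    dyadicI (leftHalf I) ∪ dyadicI (rightHalf I) = dyadicI I := by
  obtain ⟨j, k⟩ := I
  simp only [dyadicI, leftHalf, rightHalf]
  have h1 : ((((2*k : ℤ)) : ℝ) + 1) * 2 ^ (-(j+1)) = ((2*k+1 : ℤ) : ℝ) * 2 ^ (-(j+1)) := by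
    push_cast; ring
  have h2 : (((2*k : ℤ)) : ℝ) * 2 ^ (-(j+1)) = ((k : ℤ) : ℝ) * 2 ^ (-j) := by
    push_cast [half_pow]; ring
  have h3 : (((2*k+1 : ℤ) : ℝ) + 1) * 2 ^ (-(j+1)) = (((k : ℤ) : ℝ) + 1) * 2 ^ (-j) := by
    push_cast [half_pow]; ring
  rw [h1, Set.Ico_union_Ico_eq_Ico, h2, h3]
  · rw [h2]
    push_cast [half_pow]
    have := zpow_pos (two_pos (α := ℝ)) (-j); nlinarith
  · rw [h3]
    push_cast [half_pow]
    have := zpow_pos (two_pos (α := ℝ)) (-j); nlinarith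

lemma dyadic_disjoint_halves (I : ℤ × ℤ) :
    Disjoint (dyadicI (leftHalf I)) (dyadicI (rightHalf I)) := by
  obtain ⟨j, k⟩ := I
  simp only [dyadicI, leftHalf, rightHalf]
  have h1 : ((((2*k : ℤ)) : ℝ) + 1) * 2 ^ (-(j+1)) = ((2*k+1 : ℤ) : ℝ) * 2 ^ (-(j+1)) := by
    push_cast; ring
  rw [h1]
  exact Set.Ico_disjoint_Ico_same

lemma measurable_dyadicI (I : ℤ × ℤ) : MeasurableSet (dyadicI I) := measurableSet_Ico
lemma len_leftHalf (I : ℤ × ℤ) : len (leftHalf I) = len I / 2 := half_pow I.1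

lemma len_rightHalf (I : ℤ × ℤ) : len (rightHalf I) = len I / 2 := half_pow I.1

lemma integrableOn_dyadicI {f : ℝ → ℝ} (hf : LocallyIntegrable f volume) (I : ℤ × ℤ) :
    IntegrableOn f (dyadicI I) volume :=
  (hf.integrableOn_isCompact isCompact_Icc).mono_set Set.Ico_subset_Icc_self

lemma width (I : ℤ × ℤ) : ((I.2 : ℝ) + 1) * 2 ^ (-I.1) - (I.2 : ℝ) * 2 ^ (-I.1) = len I := by
  rw [len]; ring

lemma volume_dyadicI (I : ℤ × ℤ) : volume (dyadicI I) = ENNReal.ofReal (len I) := by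
  rw [dyadicI, Real.volume_Ico, width]

lemma setIntegral_split {f : ℝ → ℝ} (hf : LocallyIntegrable f volume) (I : ℤ × ℤ) :
    ∫ x in dyadicI I, f x =
      (∫ x in dyadicI (leftHalf I), f x) + ∫ x in dyadicI (rightHalf I), f x := by
  rw [← dyadic_split I, setIntegral_union (dyadic_disjoint_halves I) (measurable_dyadicI _)
    (integrableOn_dyadicI hf _) (integrableOn_dyadicI hf _)]

lemma avg_split {f : ℝ → ℝ} (hf : LocallyIntegrable f volume) (I : ℤ × ℤ) :
    avg f I = (avg f (leftHalf I) + avg f (rightHalf I)) / 2 := by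
  have h := len_pos I
  rw [avg, avg, avg, setIntegral_split hf, len_leftHalf, len_rightHalf]
  field_simp

lemma integral_dyadicI_pos {f : ℝ → ℝ} (hf : LocallyIntegrable f volume)
    (hfpos : ∀ x, 0 < f x) (I : ℤ × ℤ) : 0 < ∫ x in dyadicI I, f x := by
  rw [setIntegral_pos_iff_support_of_nonneg_ae
      (Filter.Eventually.of_forall fun x => (hfpos x).le) (integrableOn_dyadicI hf I)]
  have : Function.support f ∩ dyadicI I = dyadicI I := by
    apply Set.inter_eq_self_of_subset_right
    intro x _; exact (hfpos x).ne'
  rw [this, volume_dyadicI]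
  simp [len_pos I]

lemma avg_pos {f : ℝ → ℝ} (hf : LocallyIntegrable f volume)
    (hfpos : ∀ x, 0 < f x) (I : ℤ × ℤ) : 0 < avg f I :=
  mul_pos (inv_pos.2 (len_pos I)) (integral_dyadicI_pos hf hfpos I)
lemma one_le_avg_mul (w : ℝ → ℝ) (hwpos : ∀ x, 0 < w x)
    (hwloc : LocallyIntegrable w volume)
    (hwinvloc : LocallyIntegrable (fun x => (w x)⁻¹) volume) (I : ℤ × ℤ) :
    1 ≤ avg w I * avg (fun x => (w x)⁻¹) I := by
  set U := ∫ x in dyadicI I, w x with hU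
  set V := ∫ x in dyadicI I, (w x)⁻¹ with hV
  have hUpos : 0 < U := integral_dyadicI_pos hwloc hwpos I
  have hVpos : 0 < V := integral_dyadicI_pos hwinvloc (fun x => inv_pos.2 (hwpos x)) I
  set t := Real.sqrt V / Real.sqrt U with ht
  have hsU : 0 < Real.sqrt U := Real.sqrt_pos.2 hUpos
  have hsV : 0 < Real.sqrt V := Real.sqrt_pos.2 hVpos
  have htpos : 0 < t := div_pos hsV hsU
  have hpt : ∀ x ∈ dyadicI I, (2:ℝ) ≤ t * w x + t⁻¹ * (w x)⁻¹ := by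
    intro x _
    have hw := hwpos x
    have hab : (t * w x) * (t⁻¹ * (w x)⁻¹) = 1 := by
      field_simp
    have ha : 0 < t * w x := mul_pos htpos hw
    nlinarith [sq_nonneg (t * w x - 1)]
  have hint : ∫ x in dyadicI I, (2:ℝ) ≤ ∫ x in dyadicI I, (t * w x + t⁻¹ * (w x)⁻¹) := by
    apply setIntegral_mono_on ?_ ?_ (measurable_dyadicI I) hpt
    · refine integrableOn_const ?_
      rw [volume_dyadicI]; exact ENNReal.ofReal_ne_top
    exact ((integrableOn_dyadicI hwloc I).const_mul t).add
      ((integrableOn_dyadicI hwinvloc I).const_mul t⁻¹)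
  have h2 : ∫ x in dyadicI I, (2:ℝ) = 2 * len I := by
    rw [setIntegral_const, measureReal_def, volume_dyadicI, ENNReal.toReal_ofReal (len_pos I).le, smul_eq_mul]
    ring
  have h3 : ∫ x in dyadicI I, (t * w x + t⁻¹ * (w x)⁻¹) = t * U + t⁻¹ * V := by
    rw [integral_add (((integrableOn_dyadicI hwloc I).const_mul t))
      ((integrableOn_dyadicI hwinvloc I).const_mul t⁻¹),
      integral_const_mul, integral_const_mul]
  have h4 : t * U + t⁻¹ * V = 2 * (Real.sqrt U * Real.sqrt V) := by
    have hU2 : U = Real.sqrt U * Real.sqrt U := (Real.mul_self_sqrt hUpos.le).symm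
    have hV2 : V = Real.sqrt V * Real.sqrt V := (Real.mul_self_sqrt hVpos.le).symm
    rw [ht]
    field_simp
    nlinarith [hU2, hV2]
  have h5 : len I ≤ Real.sqrt U * Real.sqrt V := by
    rw [h2, h3, h4] at hint; linarith
  have h6 : len I ^ 2 ≤ U * V := by
    nlinarith [Real.mul_self_sqrt hUpos.le, Real.mul_self_sqrt hVpos.le,
      mul_self_le_mul_self (len_pos I).le h5]
  have hl := len_pos I
  rw [avg, avg]
  rw [show (len I)⁻¹ * U * ((len I)⁻¹ * V) = U * V / len I ^ 2 by field_simp,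
    le_div_iff₀ (by positivity)]
  linarith
lemma endpoint_lt (I : ℤ × ℤ) : (I.2 : ℝ) * 2 ^ (-I.1) < ((I.2 : ℝ) + 1) * 2 ^ (-I.1) := by
  have := len_pos I; rw [len] at this; nlinarith

lemma subset_endpoints {I J : ℤ × ℤ} (h : dyadicI I ⊆ dyadicI J) :
    (J.2 : ℝ) * 2 ^ (-J.1) ≤ (I.2 : ℝ) * 2 ^ (-I.1) ∧
      ((I.2 : ℝ) + 1) * 2 ^ (-I.1) ≤ ((J.2 : ℝ) + 1) * 2 ^ (-J.1) := by
  rwa [dyadicI, dyadicI, Set.Ico_subset_Ico_iff (endpoint_lt I)] at h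

lemma level_le_of_subset {I J : ℤ × ℤ} (h : dyadicI I ⊆ dyadicI J) : J.1 ≤ I.1 := by
  obtain ⟨h1, h2⟩ := subset_endpoints h
  have hlen : (2:ℝ) ^ (-I.1) ≤ 2 ^ (-J.1) := by nlinarith
  have := (zpow_le_zpow_iff_right₀ (one_lt_two (α := ℝ))).1 hlen
  omega

lemma eq_of_subset_of_level_eq {I J : ℤ × ℤ} (h : dyadicI I ⊆ dyadicI J)
    (hl : I.1 = J.1) : I = J := by
  obtain ⟨h1, h2⟩ := subset_endpoints h
  rw [hl] at h1 h2
  have hp := zpow_pos (two_pos (α := ℝ)) (-J.1)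
  have hk1 : (J.2 : ℝ) ≤ I.2 := by nlinarith
  have hk2 : (I.2 : ℝ) ≤ J.2 := by nlinarith
  have : I.2 = J.2 := by exact_mod_cast le_antisymm hk2 hk1
  exact Prod.ext hl this

lemma subset_half_of_subset {I J : ℤ × ℤ} (h : dyadicI I ⊆ dyadicI J) (hl : J.1 < I.1) :
    dyadicI I ⊆ dyadicI (leftHalf J) ∨ dyadicI I ⊆ dyadicI (rightHalf J) := by
  obtain ⟨h1, h2⟩ := subset_endpoints h
  set m : ℝ := ((2 * J.2 : ℤ) + 1 : ℝ) * 2 ^ (-(J.1 + 1)) with hm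
  by_cases hc : (I.2 : ℝ) * 2 ^ (-I.1) < m
  · left
    -- right endpoint of I is ≤ m
    have hM : ((2 * J.2 + 1 : ℤ) * 2 ^ (I.1 - J.1 - 1).toNat : ℤ) * (2:ℝ) ^ (-I.1) = m := by
      push_cast
      rw [hm, mul_assoc]
      congr 1
      · push_cast; ring
      rw [← zpow_natCast (2:ℝ), Int.toNat_of_nonneg (by omega)]
      rw [← zpow_add₀ (two_ne_zero (α := ℝ))]
      congr 1; omega
    have hkM : (I.2 : ℝ) < ((2 * J.2 + 1 : ℤ) * 2 ^ (I.1 - J.1 - 1).toNat : ℤ) := by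
      have hp := zpow_pos (two_pos (α := ℝ)) (-I.1)
      rw [← hM] at hc
      exact lt_of_mul_lt_mul_right hc hp.le
    have hkM' : I.2 + 1 ≤ (2 * J.2 + 1) * 2 ^ (I.1 - J.1 - 1).toNat := by exact_mod_cast hkM
    have hre : ((I.2 : ℝ) + 1) * 2 ^ (-I.1) ≤ m := by
      rw [← hM]
      have hp := zpow_pos (two_pos (α := ℝ)) (-I.1)
      have : ((I.2 : ℝ) + 1) ≤ ((2 * J.2 + 1) * 2 ^ (I.1 - J.1 - 1).toNat : ℤ) := by
        exact_mod_cast hkM'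
      nlinarith
    intro x hx
    obtain ⟨hx1, hx2⟩ := hx
    constructor
    · calc ((leftHalf J).2 : ℝ) * 2 ^ (-(leftHalf J).1) = (J.2 : ℝ) * 2 ^ (-J.1) := by
            simp only [leftHalf]; push_cast [half_pow]; ring
        _ ≤ (I.2 : ℝ) * 2 ^ (-I.1) := h1
        _ ≤ x := hx1
    · calc x < ((I.2 : ℝ) + 1) * 2 ^ (-I.1) := hx2
        _ ≤ m := hre
        _ = (((leftHalf J).2 : ℝ) + 1) * 2 ^ (-(leftHalf J).1) := by
            simp only [leftHalf, hm]; try push_cast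
            try ring
  · right
    push_neg at hc
    intro x hx
    obtain ⟨hx1, hx2⟩ := hx
    constructor
    · calc (((rightHalf J).2 : ℝ)) * 2 ^ (-(rightHalf J).1) = m := by
            simp only [rightHalf, hm]; try push_cast
            try ring
        _ ≤ (I.2 : ℝ) * 2 ^ (-I.1) := hc
        _ ≤ x := hx1
    · calc x < ((I.2 : ℝ) + 1) * 2 ^ (-I.1) := hx2
        _ ≤ ((J.2 : ℝ) + 1) * 2 ^ (-J.1) := h2
        _ = (((rightHalf J).2 : ℝ) + 1) * 2 ^ (-(rightHalf J).1) := by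
            simp only [rightHalf]; push_cast [half_pow]; ring
lemma inv_mul_midpoint_convex {x₁ x₂ y₁ y₂ : ℝ} (hx₁ : 0 < x₁) (hx₂ : 0 < x₂)
    (hy₁ : 0 < y₁) (hy₂ : 0 < y₂) :
    1 / (((x₁ + x₂) / 2) * ((y₁ + y₂) / 2)) ≤ (1 / (x₁ * y₁) + 1 / (x₂ * y₂)) / 2 := by
  rw [div_le_div_iff₀ (by positivity) (by norm_num)]
  rw [div_add_div _ _ (by positivity) (by positivity)]
  rw [div_mul_eq_mul_div, le_div_iff₀ (by positivity)]
  nlinarith [sq_nonneg (x₁*y₁ - x₂*y₂), sq_nonneg (x₁ - x₂), sq_nonneg (y₁ - y₂),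
    mul_pos hx₁ hy₁, mul_pos hx₂ hy₂, mul_pos hx₁ hy₂, mul_pos hx₂ hy₁,
    sq_nonneg (x₁*y₂ - x₂*y₁), mul_pos (mul_pos hx₁ hy₁) (mul_pos hx₂ hy₂)]

lemma bellman_step {Q a v vp vm lp lm : ℝ} (hQ : 0 < Q) (ha : 0 ≤ a)
    (hvp : 0 < vp) (hvm : 0 < vm) (hv : v = (vp + vm) / 2)
    (hlp0 : 0 ≤ lp) (hlm0 : 0 ≤ lm) (hl : a + (lp + lm) / 2 ≤ Q) :
    a / v + 4 * Q ^ 2 / (v * (Q + (a + (lp + lm) / 2))) ≤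
      2 * Q ^ 2 / (vp * (Q + lp)) + 2 * Q ^ 2 / (vm * (Q + lm)) := by
  have hvpos : 0 < v := by rw [hv]; positivity
  have hs0 : 0 ≤ (lp + lm) / 2 := by linarith
  set s := (lp + lm) / 2 with hs
  have hQs : 0 < Q + s := by linarith
  have hQl : 0 < Q + (a + s) := by linarith
  have hconv : 1 / (v * (Q + s)) ≤ (1 / (vp * (Q + lp)) + 1 / (vm * (Q + lm))) / 2 := by
    have := inv_mul_midpoint_convex hvp hvm (by linarith : (0:ℝ) < Q + lp)
      (by linarith : (0:ℝ) < Q + lm)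
    have he : ((Q + lp) + (Q + lm)) / 2 = Q + s := by rw [hs]; ring
    rw [he, ← hv] at this
    exact this
  -- suffices: a / v + 4Q²/(v(Q+a+s)) ≤ 4Q²/(v(Q+s))
  have key : a / v + 4 * Q ^ 2 / (v * (Q + (a + s))) ≤ 4 * Q ^ 2 / (v * (Q + s)) := by
    rw [div_add_div _ _ (by positivity) (by positivity), div_le_div_iff₀ (by positivity) (by positivity)]
    have h2Q1 : Q + s ≤ 2 * Q := by linarith
    have h2Q2 : Q + (a + s) ≤ 2 * Q := by linarith
    have hprod : (Q + (a + s)) * (Q + s) ≤ 4 * Q ^ 2 := by nlinarith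
    have h3 : (a * v ^ 2) * ((Q + (a + s)) * (Q + s)) ≤ (a * v ^ 2) * (4 * Q ^ 2) :=
      mul_le_mul_of_nonneg_left hprod (by positivity)
    nlinarith [h3]
  calc a / v + 4 * Q ^ 2 / (v * (Q + (a + s)))
      ≤ 4 * Q ^ 2 / (v * (Q + s)) := key
    _ = 4 * Q ^ 2 * (1 / (v * (Q + s))) := by ring
    _ ≤ 4 * Q ^ 2 * ((1 / (vp * (Q + lp)) + 1 / (vm * (Q + lm))) / 2) := by
        apply mul_le_mul_of_nonneg_left hconv (by positivity)
    _ = 2 * Q ^ 2 / (vp * (Q + lp)) + 2 * Q ^ 2 / (vm * (Q + lm)) := by ring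
lemma main_induction (w : ℝ → ℝ) (hwpos : ∀ x, 0 < w x)
    (hwloc : LocallyIntegrable w volume)
    (hwinvloc : LocallyIntegrable (fun x => (w x)⁻¹) volume)
    (lam : ℤ × ℤ → ℝ) (hlam : ∀ I, 0 ≤ lam I) (Q : ℝ) (hQpos : 0 < Q)
    (hQ : ∀ (J : ℤ × ℤ) (S : Finset (ℤ × ℤ)), (∀ I ∈ S, dyadicI I ⊆ dyadicI J) →
      (len J)⁻¹ * ∑ I ∈ S, lam I ≤ Q) :
    ∀ (n : ℕ) (J : ℤ × ℤ) (S : Finset (ℤ × ℤ)),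
      (∀ I ∈ S, dyadicI I ⊆ dyadicI J) → (∀ I ∈ S, I.1 < J.1 + n) →
      ∑ I ∈ S, lam I / avg (fun x => (w x)⁻¹) I ≤
        4 * Q * len J * avg w J -
          4 * Q ^ 2 * len J /
            (avg (fun x => (w x)⁻¹) J * (Q + (len J)⁻¹ * ∑ I ∈ S, lam I)) := by
  intro n
  induction n with
  | zero =>
    intro J S hsub hlev
    have hS : S = ∅ := by
      apply Finset.eq_empty_of_forall_notMem
      intro I hI
      have h1 := level_le_of_subset (hsub I hI)
      have h2 := hlev I hI
      simp at h2
      omega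
    subst hS
    simp only [Finset.sum_empty, mul_zero, add_zero]
    have hu := avg_pos hwloc hwpos J
    have hv := avg_pos hwinvloc (fun x => inv_pos.2 (hwpos x)) J
    have huv := one_le_avg_mul w hwpos hwloc hwinvloc J
    have hl := len_pos J
    rw [sub_nonneg, div_le_iff₀ (by positivity)]
    nlinarith [mul_le_mul_of_nonneg_left huv (by positivity : (0:ℝ) ≤ 4 * Q ^ 2 * len J)]
  | succ n ih =>
    intro J S hsub hlev
    classical
    set winv : ℝ → ℝ := fun x => (w x)⁻¹ with hwinv
    set L := leftHalf J with hL
    set R := rightHalf J with hR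
    set S' := S.filter (fun I => ¬ I = J) with hS'
    set Sp := S'.filter (fun I => dyadicI I ⊆ dyadicI L) with hSp
    set Sm := S'.filter (fun I => ¬ dyadicI I ⊆ dyadicI L) with hSm
    set S0 := S.filter (fun I => I = J) with hS0
    -- membership facts
    have hSpsub : ∀ I ∈ Sp, dyadicI I ⊆ dyadicI L := by
      intro I hI; exact (Finset.mem_filter.1 hI).2
    have hSmsub : ∀ I ∈ Sm, dyadicI I ⊆ dyadicI R := by
      intro I hI
      obtain ⟨hI', hnot⟩ := Finset.mem_filter.1 hI
      obtain ⟨hIS, hne⟩ := Finset.mem_filter.1 hI'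
      have hsubJ := hsub I hIS
      have hlt : J.1 < I.1 := by
        rcases lt_or_eq_of_le (level_le_of_subset hsubJ) with h | h
        · exact h
        · exact absurd (eq_of_subset_of_level_eq hsubJ h.symm) hne
      rcases subset_half_of_subset hsubJ hlt with h | h
      · exact absurd h hnot
      · exact h
    have hlevL : ∀ I ∈ Sp, I.1 < L.1 + n := by
      intro I hI
      have := hlev I (Finset.mem_filter.1 (Finset.mem_filter.1 hI).1).1
      simp only [hL, leftHalf]
      push_cast at this ⊢
      omega
    have hlevR : ∀ I ∈ Sm, I.1 < R.1 + n := by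
      intro I hI
      have := hlev I (Finset.mem_filter.1 (Finset.mem_filter.1 hI).1).1
      simp only [hR, rightHalf]
      push_cast at this ⊢
      omega
    have IHp := ih L Sp hSpsub hlevL
    have IHm := ih R Sm hSmsub hlevR
    -- sums split
    have hsum : ∀ f : ℤ × ℤ → ℝ, ∑ I ∈ S, f I = ∑ I ∈ S0, f I + (∑ I ∈ Sp, f I + ∑ I ∈ Sm, f I) := by
      intro f
      rw [hSp, hSm, Finset.sum_filter_add_sum_filter_not S' _ f,
        hS0, hS', Finset.sum_filter_add_sum_filter_not S (fun I => I = J) f]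
    -- abbreviations
    set u := avg w J
    set v := avg winv J
    set up := avg w L
    set um := avg w R
    set vp := avg winv L
    set vm := avg winv R
    have hlenJ := len_pos J
    have hlenL : len L = len J / 2 := len_leftHalf J
    have hlenR : len R = len J / 2 := len_rightHalf J
    have hvp : 0 < vp := avg_pos hwinvloc (fun x => inv_pos.2 (hwpos x)) L
    have hvm : 0 < vm := avg_pos hwinvloc (fun x => inv_pos.2 (hwpos x)) R
    have hv : 0 < v := avg_pos hwinvloc (fun x => inv_pos.2 (hwpos x)) J
    have husplit : u = (up + um) / 2 := avg_split hwloc J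
    have hvsplit : v = (vp + vm) / 2 := avg_split hwinvloc J
    set A := ∑ I ∈ S0, lam I with hA
    set P := ∑ I ∈ Sp, lam I with hP
    set M := ∑ I ∈ Sm, lam I with hM
    have hA0 : 0 ≤ A := Finset.sum_nonneg fun I _ => hlam I
    have hP0 : 0 ≤ P := Finset.sum_nonneg fun I _ => hlam I
    have hM0 : 0 ≤ M := Finset.sum_nonneg fun I _ => hlam I
    -- S0 sum
    have hS0sum : ∑ I ∈ S0, lam I / avg winv I = A / v := by
      have : ∑ I ∈ S0, lam I / avg winv I = ∑ I ∈ S0, lam I / v :=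
        Finset.sum_congr rfl fun I hI => by rw [(Finset.mem_filter.1 hI).2]
      rw [this, hA, Finset.sum_div]
    -- Carleson bound
    have hCarl : (len J)⁻¹ * ∑ I ∈ S, lam I ≤ Q := hQ J S hsub
    have hT : ∑ I ∈ S, lam I = A + (P + M) := by rw [hsum lam, hA, hP, hM]
    -- Bellman
    have hbell := bellman_step (Q := Q) (a := A / len J) (v := v) (vp := vp) (vm := vm)
      (lp := 2 * P / len J) (lm := 2 * M / len J) hQpos (by positivity) hvp hvm hvsplit
      (by positivity) (by positivity)
      (by rw [show A / len J + (2 * P / len J + 2 * M / len J) / 2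
              = (len J)⁻¹ * (A + (P + M)) by field_simp, ← hT]; exact hCarl)
    -- put everything together
    rw [hsum (fun I => lam I / avg winv I), hS0sum, hT]
    have e1 : Q + (len L)⁻¹ * P = Q + 2 * P / len J := by rw [hlenL]; field_simp
    have e2 : Q + (len R)⁻¹ * M = Q + 2 * M / len J := by rw [hlenR]; field_simp
    rw [e1] at IHp
    rw [e2] at IHm
    have hbell' := mul_le_mul_of_nonneg_left hbell hlenJ.le
    have hQt : v * (Q + (len J)⁻¹ * (A + (P + M))) ≠ 0 := by positivity
    have eI : A / len J + (2 * P / len J + 2 * M / len J) / 2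
        = (len J)⁻¹ * (A + (P + M)) := by field_simp
    have eL : len J * (A / len J / v +
          4 * Q ^ 2 / (v * (Q + (A / len J + (2 * P / len J + 2 * M / len J) / 2))))
        = A / v + 4 * Q ^ 2 * len J / (v * (Q + (len J)⁻¹ * (A + (P + M)))) := by
      rw [eI]
      field_simp
    have eR : len J * (2 * Q ^ 2 / (vp * (Q + 2 * P / len J))
          + 2 * Q ^ 2 / (vm * (Q + 2 * M / len J)))
        = 4 * Q ^ 2 * (len J / 2) / (vp * (Q + 2 * P / len J))
          + 4 * Q ^ 2 * (len J / 2) / (vm * (Q + 2 * M / len J)) := by ring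
    rw [eL, eR] at hbell'
    rw [hlenL] at IHp
    rw [hlenR] at IHm
    -- final linear arithmetic
    have husum : 4 * Q * (len J / 2) * up + 4 * Q * (len J / 2) * um = 4 * Q * len J * u := by
      rw [husplit]; ring
    linarith [IHp, IHm, hbell']

theorem carleson_weighted_bound
    (w : ℝ → ℝ) (hwpos : ∀ x, 0 < w x)
    (hwloc : LocallyIntegrable w volume)
    (hwinvloc : LocallyIntegrable (fun x => (w x)⁻¹) volume)
    (hA2 : BddAbove (Set.range fun I : ℤ × ℤ => avg w I * avg (fun x => (w x)⁻¹) I))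
    (lam : ℤ × ℤ → ℝ) (hlam : ∀ I, 0 ≤ lam I) (Q : ℝ)
    (hQ : ∀ (J : ℤ × ℤ) (S : Finset (ℤ × ℤ)), (∀ I ∈ S, dyadicI I ⊆ dyadicI J) →
      (len J)⁻¹ * ∑ I ∈ S, lam I ≤ Q) :
    ∀ (J : ℤ × ℤ) (S : Finset (ℤ × ℤ)), (∀ I ∈ S, dyadicI I ⊆ dyadicI J) →
      (len J)⁻¹ * ∑ I ∈ S, lam I / avg (fun x => (w x)⁻¹) I ≤ 4 * Q * avg w J := by
  intro J S hsub
  have hQ0 : 0 ≤ Q := by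
    have := hQ J ∅ (by simp)
    simpa using this
  rcases eq_or_lt_of_le hQ0 with hQz | hQpos
  · -- Q = 0 : all lam vanish
    have hzero : ∀ I ∈ S, lam I = 0 := by
      intro I hI
      have h1 := hQ J {I} (by simpa using hsub I hI)
      rw [Finset.sum_singleton, ← hQz] at h1
      have hl := len_pos J
      have : lam I ≤ 0 := by
        by_contra hcon
        push_neg at hcon
        nlinarith [inv_pos.2 hl]
      linarith [hlam I]
    have hs : ∑ I ∈ S, lam I / avg (fun x => (w x)⁻¹) I = 0 := by
      apply Finset.sum_eq_zero
      intro I hI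
      rw [hzero I hI, zero_div]
    rw [hs, mul_zero, ← hQz]
    have := avg_pos hwloc hwpos J
    nlinarith
  · -- Q > 0 : use the Bellman induction
    set n : ℕ := (S.sup fun I => (I.1 - J.1).toNat) + 1 with hn
    have hlev : ∀ I ∈ S, I.1 < J.1 + (n : ℤ) := by
      intro I hI
      have h1 : J.1 ≤ I.1 := level_le_of_subset (hsub I hI)
      have h2 : (I.1 - J.1).toNat ≤ S.sup fun I => (I.1 - J.1).toNat :=
        Finset.le_sup (f := fun I : ℤ × ℤ => (I.1 - J.1).toNat) hI
      have h3 : ((I.1 - J.1).toNat : ℤ) ≤ ((S.sup fun I => (I.1 - J.1).toNat : ℕ) : ℤ) := by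
        exact_mod_cast h2
      rw [hn]
      push_cast
      omega
    have hmain := main_induction w hwpos hwloc hwinvloc lam hlam Q hQpos hQ n J S hsub hlev
    have hv := avg_pos hwinvloc (fun x => inv_pos.2 (hwpos x)) J
    have hu := avg_pos hwloc hwpos J
    have hl := len_pos J
    have hell : 0 ≤ (len J)⁻¹ * ∑ I ∈ S, lam I :=
      mul_nonneg (inv_nonneg.2 hl.le) (Finset.sum_nonneg fun I _ => hlam I)
    have hD : 0 ≤ 4 * Q ^ 2 * len J /
        (avg (fun x => (w x)⁻¹) J * (Q + (len J)⁻¹ * ∑ I ∈ S, lam I)) := by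
      apply div_nonneg (by positivity)
      apply mul_nonneg hv.le
      linarith
    have h4 : ∑ I ∈ S, lam I / avg (fun x => (w x)⁻¹) I ≤ 4 * Q * len J * avg w J := by
      linarith
    calc (len J)⁻¹ * ∑ I ∈ S, lam I / avg (fun x => (w x)⁻¹) I
        ≤ (len J)⁻¹ * (4 * Q * len J * avg w J) :=
          mul_le_mul_of_nonneg_left h4 (inv_nonneg.2 hl.le)
      _ = 4 * Q * avg w J := by field_simp
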